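/- Let $v \in \mathbb{R}^N$, let $\hat\Pi$ be the orthogonal projection onto a linear subspace $\mathcal{F}_N \subseteq \mathbb{R}^N$, let $\hat{\mathcal{T}}$ be a $\gamma$-contraction in the Euclidean norm with $\gamma \in (0,1)$, and let $\hat v$ be the unique fixed point of $\hat\Pi\hat{\mathcal{T}}$. Then $\|v - \hat v\|_2 \le \frac{1}{\sqrt{1-\gamma^2}} \|v - \hat\Pi v\|_2 + \frac{1}{1-\gamma} \|\hat\Pi v - \hat\Pi \hat{\mathcal{T}} v\|_2$. -/

import Mathlib

theorem stmt_19 (N : ℕ) (γ : ℝ) (hγ : γ ∈ Set.Ioo (0:ℝ) 1)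
    (F : Submodule ℝ (EuclideanSpace ℝ (Fin N)))
    (T : EuclideanSpace ℝ (Fin N) → EuclideanSpace ℝ (Fin N))
    (hT : ∀ x y, ‖T x - T y‖ ≤ γ * ‖x - y‖)
    (v hatv : EuclideanSpace ℝ (Fin N))
    (hfix : (Submodule.orthogonalProjectionOnto F (T hatv) : EuclideanSpace ℝ (Fin N)) = hatv) :
    ‖v - hatv‖ ≤
      (1 / Real.sqrt (1 - γ^2)) * ‖v - (Submodule.orthogonalProjectionOnto F v : EuclideanSpace ℝ (Fin N))‖ +
        (1 / (1 - γ)) *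
          ‖(Submodule.orthogonalProjectionOnto F v : EuclideanSpace ℝ (Fin N)) -
            (Submodule.orthogonalProjectionOnto F (T v) : EuclideanSpace ℝ (Fin N))‖ := by
  obtain ⟨hγ0, hγ1⟩ := hγ
  set p : EuclideanSpace ℝ (Fin N) := (Submodule.orthogonalProjectionOnto F v : EuclideanSpace ℝ (Fin N))
  set q : EuclideanSpace ℝ (Fin N) := (Submodule.orthogonalProjectionOnto F (T v) : EuclideanSpace ℝ (Fin N))
  set a := ‖v - p‖
  set b := ‖p - q‖
  set d := ‖v - hatv‖
  have ha : 0 ≤ a := norm_nonneg _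
  have hb : 0 ≤ b := norm_nonneg _
  have hd : 0 ≤ d := norm_nonneg _
  -- hatv ∈ F
  have hmem : hatv ∈ F := hfix ▸ (Submodule.orthogonalProjectionOnto F (T hatv)).2
  -- Pythagoras
  have hperp : v - p ∈ Fᗮ := F.sub_starProjection_mem_orthogonal v
  have hinner : (inner ℝ (v - p) (p - hatv) : ℝ) = 0 :=
    real_inner_comm (p - hatv) (v - p) ▸ hperp (p - hatv) (sub_mem (Submodule.orthogonalProjectionOnto F v).2 hmem)
  have hpyth : d ^ 2 = a ^ 2 + ‖p - hatv‖ ^ 2 := by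
    have : v - hatv = (v - p) + (p - hatv) := by abel
    rw [show d = ‖(v - p) + (p - hatv)‖ by rw [← this],
      norm_add_sq_real, hinner]
    ring
  -- contraction bound on ‖p - hatv‖
  have hqh : ‖q - hatv‖ ≤ γ * d := by
    rw [← hfix]
    have : (Submodule.orthogonalProjectionOnto F (T v) : EuclideanSpace ℝ (Fin N)) -
        (Submodule.orthogonalProjectionOnto F (T hatv) : EuclideanSpace ℝ (Fin N)) =
        (Submodule.orthogonalProjectionOnto F (T v - T hatv) : EuclideanSpace ℝ (Fin N)) := by
      simp [map_sub]
    rw [this]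
    calc ‖(Submodule.orthogonalProjectionOnto F (T v - T hatv) : EuclideanSpace ℝ (Fin N))‖
        ≤ ‖T v - T hatv‖ := by
          simpa using (Submodule.orthogonalProjectionOnto F).le_opNorm (T v - T hatv)
            |>.trans (by nlinarith [Submodule.orthogonalProjectionOnto_norm_le F,
              (Submodule.orthogonalProjectionOnto F).opNorm_nonneg, norm_nonneg (T v - T hatv)])
      _ ≤ γ * d := hT v hatv
  have hph : ‖p - hatv‖ ≤ b + γ * d :=
    (norm_sub_le_norm_sub_add_norm_sub p q hatv).trans (by linarith)
  have key : d ^ 2 ≤ a ^ 2 + (b + γ * d) ^ 2 := by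
    have h1 : ‖p - hatv‖ ^ 2 ≤ (b + γ * d) ^ 2 := by
      have := norm_nonneg (p - hatv)
      nlinarith
    linarith [hpyth, h1]
  -- algebra
  set s := Real.sqrt (1 - γ ^ 2)
  have hs : 0 < s := Real.sqrt_pos.2 (by nlinarith)
  have hs2 : s ^ 2 = 1 - γ ^ 2 := Real.sq_sqrt (by nlinarith)
  by_contra hcon
  push_neg at hcon
  have hconv : (1 / s) * a + (1 / (1 - γ)) * b < d := hcon
  have h1γ : 0 < 1 - γ := by linarith
  have f1 : (1 - γ) * d - b > (1 - γ) * a / s := by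
    have : d > a / s + b / (1 - γ) := by
      field_simp at hconv ⊢; linarith
    have h2 : (1 - γ) * d > (1 - γ) * (a / s + b / (1 - γ)) := by
      exact (mul_lt_mul_iff_right₀ h1γ).2 this
    have h3 : (1 - γ) * (a / s + b / (1 - γ)) = (1 - γ) * a / s + b := by
      field_simp
    linarith
  have f2 : (1 + γ) * d + b > (1 + γ) * a / s := by
    have : d > a / s := by
      have hb' : 0 ≤ (1 / (1 - γ)) * b := by positivity
      calc a / s = (1/s) * a := by ring
        _ ≤ (1/s) * a + (1/(1-γ)) * b := by linarith
        _ < d := hconv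
    have h2 : (1 + γ) * (a / s) < (1 + γ) * d := by
      exact mul_lt_mul_of_pos_left this (by linarith)
    rw [mul_div_assoc]
    linarith
  have fpos1 : 0 ≤ (1 - γ) * a / s := by positivity
  have fpos2 : 0 ≤ (1 + γ) * a / s := by positivity
  have hmul : ((1 - γ) * d - b) * ((1 + γ) * d + b) >
      ((1 - γ) * a / s) * ((1 + γ) * a / s) := by
    apply mul_lt_mul' f1.le f2 fpos2 (by linarith)
  have hrhs : ((1 - γ) * a / s) * ((1 + γ) * a / s) = a ^ 2 := by
    have hss : s * s = 1 - γ ^ 2 := by rw [← hs2]; ring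
    rw [div_mul_div_comm, div_eq_iff (by positivity), hss]
    ring
  have hlhs : ((1 - γ) * d - b) * ((1 + γ) * d + b) = d ^ 2 - (b + γ * d) ^ 2 := by ring
  rw [hrhs, hlhs] at hmul
  linarith
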